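/- Let n ≥ 1 and let W be a real n×n matrix that is symmetric, has nonnegative entries, and zero diagonal, with Laplacian matrix L := diag(W·1) − W and degree vector d given by d_i := #{j : W i j > 0}. If D is a real symmetric n×n matrix with zero diagonal and nonnegative entries satisfying D i j ≥ 1 / (W i j) whenever W i j > 0, and (L·D + 2·I − (2·1 − d)·1ᵀ) i j = 0 for all indices i < j (indices ordered as elements of Fin n), then ∑_{i=1}^n d_i = 2(n − 1). -/

import Mathlib

open Matrix Finset BigOperators

/-- If a symmetric zero-diagonal nonnegative matrix `D` dominates the reciprocal weight
matrix entrywise and the upper-triangular part of the identity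
`L·D + 2·I = (2·1 − d)·1ᵀ` holds, then the degrees sum to `2(n − 1)`. -/
theorem upper_triangular_identity_degree_sum {n : ℕ} (hn : 1 ≤ n)
    (W : Matrix (Fin n) (Fin n) ℝ)
    (hsymm : W.IsSymm) (hnonneg : ∀ i j, 0 ≤ W i j) (hdiag : ∀ i, W i i = 0)
    (L : Matrix (Fin n) (Fin n) ℝ)
    (hL : L = Matrix.diagonal (fun i => ∑ j, W i j) - W)
    (d : Fin n → ℝ)
    (hd : ∀ i, d i = ((Finset.univ.filter fun j => 0 < W i j).card : ℝ))
    (D : Matrix (Fin n) (Fin n) ℝ)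
    (hDsymm : D.IsSymm) (hDdiag : ∀ i, D i i = 0) (hDnonneg : ∀ i j, 0 ≤ D i j)
    (hDW : ∀ i j, 0 < W i j → 1 / W i j ≤ D i j)
    (hupper : ∀ i j : Fin n, i < j →
      ((L * D + (2 : ℝ) • (1 : Matrix (Fin n) (Fin n) ℝ) -
        Matrix.vecMulVec (fun i => 2 - d i) (fun _ => (1 : ℝ)) :
        Matrix (Fin n) (Fin n) ℝ)) i j = 0) :
    ∑ i, d i = 2 * ((n : ℝ) - 1) := by
  classical
  set M : Matrix (Fin n) (Fin n) ℝ :=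
    L * D + (2 : ℝ) • (1 : Matrix (Fin n) (Fin n) ℝ) -
      Matrix.vecMulVec (fun i => 2 - d i) (fun _ => (1 : ℝ)) with hMdef
  -- the graph
  let G : SimpleGraph (Fin n) :=
    { Adj := fun i j => 0 < W i j
      symm := ⟨fun i j h => by
        show 0 < W j i
        rw [← hsymm.apply j i]
        exact h⟩
      loopless := ⟨fun i h => by
        have h' : 0 < W i i := h
        rw [hdiag i] at h'
        exact lt_irrefl 0 h'⟩ }
  have hGadj : ∀ i j : Fin n, G.Adj i j ↔ 0 < W i j := fun i j => Iff.rfl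
  let t : Fin n := ⟨n - 1, by omega⟩
  have htmax : ∀ i : Fin n, i ≤ t := by
    intro i
    have := i.isLt
    rw [Fin.le_def]
    simp only [t]
    omega
  set C : Finset (Fin n) := univ.filter (fun i => G.Reachable i t) with hCdef
  set Cc : Finset (Fin n) := univ.filter (fun i => ¬ G.Reachable i t) with hCcdef
  have htC : t ∈ C := by
    rw [hCdef, mem_filter]
    exact ⟨mem_univ t, SimpleGraph.Reachable.refl t⟩
  have htCc : t ∉ Cc := by
    rw [hCcdef, mem_filter]
    rintro ⟨-, h⟩
    exact h (SimpleGraph.Reachable.refl t)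
  have hCclosed : ∀ i k, i ∈ C → 0 < W i k → k ∈ C := by
    intro i k hi hw
    rw [hCdef, mem_filter] at hi ⊢
    refine ⟨mem_univ k, ?_⟩
    have hadj : G.Adj k i := G.adj_symm hw
    exact hadj.reachable.trans hi.2
  have hCcclosed : ∀ i k, i ∈ Cc → 0 < W i k → k ∈ Cc := by
    intro i k hi hw
    rw [hCcdef, mem_filter] at hi ⊢
    refine ⟨mem_univ k, fun hreach => ?_⟩
    have hadj : G.Adj i k := hw
    exact hi.2 (hadj.reachable.trans hreach)
  -- entrywise formula for M
  have hMent : ∀ i j, M i j = (∑ k, L i k * D k j) + (if i = j then (2:ℝ) else 0) - (2 - d i) := by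
    intro i j
    rw [hMdef]
    simp [Matrix.sub_apply, Matrix.add_apply, Matrix.mul_apply, Matrix.smul_apply,
      Matrix.one_apply, Matrix.vecMulVec_apply, mul_ite, mul_one, mul_zero]
  -- column sums of L over closed sets vanish
  have hcolL : ∀ S : Finset (Fin n), (∀ i k, i ∈ S → 0 < W i k → k ∈ S) →
      ∀ k, ∑ i ∈ S, L i k = 0 := by
    intro S hS k
    simp only [hL, Matrix.sub_apply, Matrix.diagonal_apply]
    rw [Finset.sum_sub_distrib]
    have h1 : ∑ i ∈ S, (if i = k then ∑ j, W i j else 0)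
        = if k ∈ S then ∑ j, W k j else 0 := Finset.sum_ite_eq' S k _
    rw [h1]
    by_cases hk : k ∈ S
    · rw [if_pos hk]
      have h2 : ∑ i ∈ S, W i k = ∑ i, W i k := by
        apply Finset.sum_subset (Finset.subset_univ S)
        intro i _ hi
        by_contra hne
        have hw : 0 < W i k := lt_of_le_of_ne (hnonneg i k) (Ne.symm hne)
        have hw' : 0 < W k i := by rw [← hsymm.apply k i]; exact hw
        exact hi (hS k i hk hw')
      rw [h2]
      have h3 : ∑ i, W i k = ∑ j, W k j := by
        apply Finset.sum_congr rfl
        intro i _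
        exact hsymm.apply k i
      rw [h3, sub_self]
    · rw [if_neg hk]
      have h2 : ∑ i ∈ S, W i k = 0 := by
        apply Finset.sum_eq_zero
        intro i hi
        by_contra hne
        have hw : 0 < W i k := lt_of_le_of_ne (hnonneg i k) (Ne.symm hne)
        exact hk (hS i k hi hw)
      rw [h2, zero_sub, neg_eq_zero]
  -- column sums of M over closed sets
  have hMsum : ∀ S : Finset (Fin n), (∀ i k, i ∈ S → 0 < W i k → k ∈ S) →
      ∑ i ∈ S, M i t = (if t ∈ S then (2:ℝ) else 0) - ∑ i ∈ S, (2 - d i) := by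
    intro S hS
    have : ∑ i ∈ S, M i t
        = (∑ i ∈ S, ∑ k, L i k * D k t) + (∑ i ∈ S, if i = t then (2:ℝ) else 0)
          - ∑ i ∈ S, (2 - d i) := by
      rw [← Finset.sum_add_distrib, ← Finset.sum_sub_distrib]
      exact Finset.sum_congr rfl fun i _ => hMent i t
    rw [this]
    have hz : ∑ i ∈ S, ∑ k, L i k * D k t = 0 := by
      rw [Finset.sum_comm]
      apply Finset.sum_eq_zero
      intro k _
      rw [← Finset.sum_mul, hcolL S hS k, zero_mul]
    rw [hz, zero_add, Finset.sum_ite_eq' S t _]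
  -- upper triangular vanishing at column t
  have hMupper : ∀ S : Finset (Fin n), ∑ i ∈ S, M i t = if t ∈ S then M t t else 0 := by
    intro S
    have : ∑ i ∈ S, M i t = ∑ i ∈ S, (if i = t then M t t else 0) := by
      apply Finset.sum_congr rfl
      intro i _
      by_cases hi : i = t
      · rw [if_pos hi, hi]
      · rw [if_neg hi]
        exact hupper i t (lt_of_le_of_ne (htmax i) hi)
    rw [this, Finset.sum_ite_eq' S t _]
  -- the two column equations
  have eCc : ∑ i ∈ Cc, (2 - d i) = 0 := by
    have h1 := hMsum Cc hCcclosed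
    have h2 := hMupper Cc
    rw [if_neg htCc] at h1 h2
    rw [h2] at h1
    linarith
  have eC : M t t = 2 - ∑ i ∈ C, (2 - d i) := by
    have h1 := hMsum C hCclosed
    have h2 := hMupper C
    rw [if_pos htC] at h1 h2
    rw [h2] at h1
    exact h1
  -- M t t ≤ 0
  have hMtt : M t t = d t - ∑ k, W t k * D k t := by
    rw [hMent, if_pos rfl]
    have : ∑ k, L t k * D k t = - ∑ k, W t k * D k t := by
      simp only [hL, Matrix.sub_apply, Matrix.diagonal_apply, sub_mul]
      rw [Finset.sum_sub_distrib]
      have h1 : ∑ k, (if t = k then ∑ j, W t j else 0) * D k t = 0 := by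
        rw [Finset.sum_eq_single t]
        · rw [if_pos rfl, hDdiag t, mul_zero]
        · intro k _ hk
          rw [if_neg (Ne.symm hk), zero_mul]
        · intro h
          exact absurd (mem_univ t) h
      rw [h1, zero_sub]
    rw [this]
    ring
  have hMtt_le : M t t ≤ 0 := by
    rw [hMtt, sub_nonpos, hd t]
    have h1 : ((univ.filter fun j => 0 < W t j).card : ℝ)
        = ∑ k, (if 0 < W t k then (1:ℝ) else 0) := by
      rw [Finset.sum_boole]
    rw [h1]
    apply Finset.sum_le_sum
    intro k _
    by_cases hw : 0 < W t k
    · rw [if_pos hw]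
      have hdk : D t k = D k t := (hDsymm.apply t k).symm
      have := hDW t k hw
      rw [div_le_iff₀ hw] at this
      calc (1:ℝ) ≤ D t k * W t k := this
      _ = W t k * D k t := by rw [hdk]; ring
    · rw [if_neg hw]
      exact mul_nonneg (hnonneg t k) (hDnonneg k t)
  -- lower bound: ∑_{i ∈ C} deg i ≥ 2 (|C| - 1)  via parent injection
  have hparent : ∀ v : Fin n, ∃ u, v ∈ C.erase t →
      (0 < W v u ∧ G.dist u t + 1 = G.dist v t) := by
    intro v
    by_cases hv : v ∈ C.erase t
    · have hvt : v ≠ t := Finset.ne_of_mem_erase hv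
      have hvC : v ∈ C := Finset.mem_of_mem_erase hv
      have hreach : G.Reachable v t := by
        rw [hCdef, mem_filter] at hvC; exact hvC.2
      obtain ⟨p, hp⟩ := hreach.exists_walk_length_eq_dist
      cases p with
      | nil => exact absurd rfl hvt
      | @cons _ u _ hadj q =>
        refine ⟨u, fun _ => ⟨hadj, ?_⟩⟩
        rw [SimpleGraph.Walk.length_cons] at hp
        have hle : G.dist u t ≤ q.length := SimpleGraph.dist_le q
        obtain ⟨r, hr⟩ := q.reachable.exists_walk_length_eq_dist
        have hge : G.dist v t ≤ G.dist u t + 1 := by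
          have := SimpleGraph.dist_le (SimpleGraph.Walk.cons hadj r)
          rw [SimpleGraph.Walk.length_cons, hr] at this
          exact this
        omega
    · exact ⟨v, fun h => absurd h hv⟩
  choose pf hpf using hparent
  set E : Finset (Fin n × Fin n) :=
    (C ×ˢ (univ : Finset (Fin n))).filter (fun p => 0 < W p.1 p.2) with hEdef
  have hkey : 2 * (C.card - 1) ≤ E.card := by
    have hdom : ((C.erase t) ×ˢ (univ : Finset Bool)).card = 2 * (C.card - 1) := by
      rw [Finset.card_product, Finset.card_erase_of_mem htC, Finset.card_univ,
        Fintype.card_bool, mul_comm]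
    rw [← hdom]
    apply Finset.card_le_card_of_injOn
      (fun x => if x.2 then (x.1, pf x.1) else (pf x.1, x.1))
    · intro x hx
      simp only [Finset.mem_coe] at hx ⊢
      rw [Finset.mem_product] at hx
      obtain ⟨hw, hdist⟩ := hpf x.1 hx.1
      have hx1C : x.1 ∈ C := Finset.mem_of_mem_erase hx.1
      have hpfC : pf x.1 ∈ C := hCclosed x.1 (pf x.1) hx1C hw
      by_cases hb : x.2
      · rw [if_pos hb, hEdef, mem_filter, Finset.mem_product]
        exact ⟨⟨hx1C, mem_univ _⟩, hw⟩
      · rw [if_neg hb, hEdef, mem_filter, Finset.mem_product]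
        refine ⟨⟨hpfC, mem_univ _⟩, ?_⟩
        show 0 < W (pf x.1) x.1
        rw [hsymm.apply x.1 (pf x.1)]
        exact hw
    · intro a ha b hb heq
      rw [Finset.coe_product, Set.mem_prod] at ha hb
      obtain ⟨haC, -⟩ := ha
      obtain ⟨hbC, -⟩ := hb
      rw [Finset.mem_coe] at haC hbC
      obtain ⟨-, hda⟩ := hpf a.1 haC
      obtain ⟨-, hdb⟩ := hpf b.1 hbC
      simp only at heq
      by_cases hab : a.2 <;> by_cases hbb : b.2
      · rw [if_pos hab, if_pos hbb, Prod.mk.injEq] at heq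
        have hb2 : a.2 = b.2 := by rw [hab, hbb]
        exact Prod.ext heq.1 hb2
      · rw [if_pos hab, if_neg hbb, Prod.mk.injEq] at heq
        obtain ⟨h1, h2⟩ := heq
        rw [← h1] at hdb
        rw [h2] at hda
        omega
      · rw [if_neg hab, if_pos hbb, Prod.mk.injEq] at heq
        obtain ⟨h1, h2⟩ := heq
        rw [← h2] at hdb
        rw [h1] at hda
        omega
      · rw [if_neg hab, if_neg hbb, Prod.mk.injEq] at heq
        have hb2 : a.2 = b.2 := by
          rw [Bool.not_eq_true] at hab hbb
          rw [hab, hbb]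
        exact Prod.ext heq.2 hb2
  have hEcard : E.card = ∑ i ∈ C, (univ.filter fun j => 0 < W i j).card := by
    rw [hEdef, Finset.card_filter, Finset.sum_product]
    exact Finset.sum_congr rfl fun i _ => (Finset.card_filter _ _).symm
  -- combine
  have hCpos : 1 ≤ C.card := Finset.card_pos.mpr ⟨t, htC⟩
  have hdC : ∑ i ∈ C, d i = ((∑ i ∈ C, (univ.filter fun j => 0 < W i j).card : ℕ) : ℝ) := by
    rw [Nat.cast_sum]
    exact Finset.sum_congr rfl fun i _ => hd i
  have hlow : 2 * ((C.card : ℝ) - 1) ≤ ∑ i ∈ C, d i := by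
    rw [hdC]
    have h1 : ((2 * (C.card - 1) : ℕ) : ℝ) ≤ ((E.card : ℕ) : ℝ) := Nat.cast_le.mpr hkey
    rw [hEcard] at h1
    have h2 : ((2 * (C.card - 1) : ℕ) : ℝ) = 2 * ((C.card : ℝ) - 1) := by
      rw [Nat.cast_mul, Nat.cast_sub hCpos]
      norm_num
    linarith [h1, h2.symm.le]
  have hMtt_ge : 0 ≤ M t t := by
    rw [eC]
    have : ∑ i ∈ C, (2 - d i) = 2 * (C.card : ℝ) - ∑ i ∈ C, d i := by
      rw [Finset.sum_sub_distrib, Finset.sum_const, nsmul_eq_mul]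
      ring
    rw [this]
    linarith
  have hMtt0 : M t t = 0 := le_antisymm hMtt_le hMtt_ge
  -- totals
  have hsplit : ∑ i ∈ C, d i + ∑ i ∈ Cc, d i = ∑ i, d i := by
    rw [hCdef, hCcdef]
    exact Finset.sum_filter_add_sum_filter_not univ _ d
  have hcards : C.card + Cc.card = n := by
    rw [hCdef, hCcdef]
    rw [Finset.card_filter_add_card_filter_not]
    simp
  have hdCc : ∑ i ∈ Cc, d i = 2 * (Cc.card : ℝ) := by
    have : ∑ i ∈ Cc, (2 - d i) = 2 * (Cc.card : ℝ) - ∑ i ∈ Cc, d i := by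
      rw [Finset.sum_sub_distrib, Finset.sum_const, nsmul_eq_mul]
      ring
    rw [this] at eCc
    linarith
  have hdC2 : ∑ i ∈ C, d i = 2 * (C.card : ℝ) - 2 := by
    rw [hMtt0] at eC
    have : ∑ i ∈ C, (2 - d i) = 2 * (C.card : ℝ) - ∑ i ∈ C, d i := by
      rw [Finset.sum_sub_distrib, Finset.sum_const, nsmul_eq_mul]
      ring
    rw [this] at eC
    linarith
  have hcast : (C.card : ℝ) + (Cc.card : ℝ) = (n : ℝ) := by
    rw [← Nat.cast_add, hcards]
  rw [← hsplit, hdC2, hdCc]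
  linarith
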